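/- On the open subset M̃ = {(x_1,...,x_{n+1}) ∈ H^n : x_1 x_2 x_{n+1} ≠ 0, x_1 ≠ x_{n+1}} of the hyperboloid model, the vector field V = e^{x_1/x_{n+1}} (∂_2 + x_2 Φ) is a proper torqued vector field: ∇_X V = f X + ω(X) V with f = x_2 e^{x_1/x_{n+1}} nowhere zero, ω = dg with g = x_1/x_{n+1} nowhere zero as a 1-form on M̃, and ω(V) = 0. -/

import Mathlib

noncomputable section

namespace HyperboloidModel

variable {n : ℕ}

/-- The underlying space `ℝ^(n+1)_1` of Lorentz–Minkowski geometry; the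
coordinates `x_1, x_2, x_(n+1)` correspond to the indices `0`, `1`, `Fin.last n`. -/
abbrev E (n : ℕ) := Fin (n + 1) → ℝ

/-- The Lorentz–Minkowski metric `⟨v,w⟩ = −v_1 w_1 + ∑_{i≥2} v_i w_i`. -/
def mink (v w : E n) : ℝ := (∑ i, v i * w i) - 2 * (v 0 * w 0)

/-- The induced Levi-Civita connection of the hyperboloid `H^n = {P : ⟨P,P⟩ = −1}`:
`∇_X Y = dY(X) − ⟨X,Y⟩ Φ` (Gauss formula), `Φ` the position vector. -/
def hypbConn (X Y : E n → E n) (p : E n) : E n :=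
  fderiv ℝ Y p (X p) - mink (X p) (Y p) • p

/-- The function `g = x_1 / x_(n+1)`. -/
def gFun : E n → ℝ := fun q => q 0 / q (Fin.last n)

/-- The vector field `V = e^{x_1/x_(n+1)} (∂_2 + x_2 Φ)`
(note `T = ∂_2 + ⟨∂_2, Φ⟩Φ = ∂_2 + x_2 Φ`). -/
def V : E n → E n := fun q =>
  Real.exp (gFun q) • ((Pi.single 1 1 : E n) + q 1 • q)

/-- The conformal scalar `f = x_2 e^{x_1/x_(n+1)}`. -/
def f : E n → ℝ := fun q => q 1 * Real.exp (gFun q)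

/-! ### Auxiliary lemmas -/

theorem mink_add_right (v w w' : E n) : mink v (w + w') = mink v w + mink v w' := by
  simp [mink, mul_add, Finset.sum_add_distrib]; ring

theorem mink_smul_right (v : E n) (c : ℝ) (w : E n) : mink v (c • w) = c * mink v w := by
  unfold mink
  rw [mul_sub, Finset.mul_sum]
  congr 1
  · exact Finset.sum_congr rfl fun i _ => by simp; ring
  · simp; ring

theorem mink_smul_left (c : ℝ) (v w : E n) : mink (c • v) w = c * mink v w := by
  unfold mink
  rw [mul_sub, Finset.mul_sum]
  congr 1
  · exact Finset.sum_congr rfl fun i _ => by simp; ring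
  · simp; ring

theorem mink_add_left (x y w : E n) : mink (x + y) w = mink x w + mink y w := by
  simp [mink, add_mul, Finset.sum_add_distrib]; ring

theorem val_one_fin (hn : 1 ≤ n) : ((1 : Fin (n+1)) : ℕ) = 1 := by
  have h1 : (1:ℕ) < n+1 := by omega
  simp [Fin.val_one', Nat.mod_eq_of_lt h1]

theorem zero_ne_one_fin (hn : 1 ≤ n) : (0 : Fin (n + 1)) ≠ 1 := by
  intro h
  have := congrArg Fin.val h
  rw [Fin.val_zero, val_one_fin hn] at this
  omega

theorem last_ne_one_fin (hn : 2 ≤ n) : (Fin.last n : Fin (n+1)) ≠ 1 := by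
  intro h
  have := congrArg Fin.val h
  rw [Fin.val_last, val_one_fin (by omega)] at this
  omega

theorem last_ne_zero_fin (hn : 1 ≤ n) : (Fin.last n : Fin (n+1)) ≠ 0 := by
  intro h
  have := congrArg Fin.val h
  rw [Fin.val_last, Fin.val_zero] at this
  omega

theorem mink_single_right (hn : 1 ≤ n) (v : E n) :
    mink v (Pi.single 1 1 : E n) = v 1 := by
  have h01 := zero_ne_one_fin hn
  simp [mink, Pi.single_apply, Finset.sum_ite_eq', h01]

theorem single_mink_left (j : Fin (n + 1)) (p : E n) :
    mink (Pi.single j (1 : ℝ) : E n) p = p j - 2 * ((Pi.single j (1:ℝ) : E n) 0 * p 0) := by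
  simp [mink, Pi.single_apply, Finset.sum_ite_eq]

theorem gderiv (p : E n) (hc : p (Fin.last n) ≠ 0) :
    HasFDerivAt (gFun (n := n))
      ((p (Fin.last n))⁻¹ • (ContinuousLinearMap.proj 0 : E n →L[ℝ] ℝ)
        - (p 0 * (p (Fin.last n) ^ 2)⁻¹) • (ContinuousLinearMap.proj (Fin.last n) : E n →L[ℝ] ℝ)) p := by
  have h1 : HasFDerivAt (fun q : E n => q 0)
      (ContinuousLinearMap.proj 0 : E n →L[ℝ] ℝ) p := by exact hasFDerivAt_apply 0 p
  have hlast : HasFDerivAt (fun q : E n => q (Fin.last n))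
      (ContinuousLinearMap.proj (Fin.last n) : E n →L[ℝ] ℝ) p := by
    exact hasFDerivAt_apply (Fin.last n) p
  have h2 : HasFDerivAt (fun q : E n => (q (Fin.last n))⁻¹)
      (-((p (Fin.last n) ^ 2)⁻¹ • (ContinuousLinearMap.proj (Fin.last n) : E n →L[ℝ] ℝ))) p := by
    have := (hasDerivAt_inv hc).comp_hasFDerivAt p hlast
    simpa [Function.comp_def, neg_smul] using this
  have h3 := h1.mul h2
  have heq : (gFun (n := n)) = fun q : E n => q 0 * (q (Fin.last n))⁻¹ := by
    funext q; simp [gFun, div_eq_mul_inv]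
  rw [heq]
  refine (show HasFDerivAt (fun q : E n => q 0 * (q (Fin.last n))⁻¹) _ p from h3).congr_fderiv ?_
  ext w
  simp
  ring

theorem gderiv_apply (p : E n) (hc : p (Fin.last n) ≠ 0) (v : E n) :
    fderiv ℝ gFun p v = (v 0 * p (Fin.last n) - p 0 * v (Fin.last n)) / (p (Fin.last n))^2 := by
  rw [(gderiv p hc).fderiv]
  simp
  field_simp

theorem Vderiv_apply (p : E n) (hc : p (Fin.last n) ≠ 0) (v : E n) :
    fderiv ℝ V p v = Real.exp (gFun p) • (p 1 • v + v 1 • p)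
      + (Real.exp (gFun p) * fderiv ℝ gFun p v) • ((Pi.single 1 1 : E n) + p 1 • p) := by
  have h1 : HasFDerivAt (fun q : E n => q 1)
      (ContinuousLinearMap.proj 1 : E n →L[ℝ] ℝ) p := by exact hasFDerivAt_apply 1 p
  have hW : HasFDerivAt (fun q : E n => (Pi.single 1 1 : E n) + q 1 • q)
      (p 1 • (ContinuousLinearMap.id ℝ (E n))
        + (ContinuousLinearMap.proj 1 : E n →L[ℝ] ℝ).smulRight p) p :=
    (h1.smul (hasFDerivAt_id p)).const_add _
  have hexp : HasFDerivAt (fun q : E n => Real.exp (gFun q))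
      (Real.exp (gFun p) • ((p (Fin.last n))⁻¹ • (ContinuousLinearMap.proj 0 : E n →L[ℝ] ℝ)
        - (p 0 * (p (Fin.last n) ^ 2)⁻¹) • (ContinuousLinearMap.proj (Fin.last n) : E n →L[ℝ] ℝ))) p :=
    (gderiv p hc).exp
  have hV := hexp.smul hW
  rw [show (V : E n → E n) = fun q => Real.exp (gFun q) • ((Pi.single 1 1 : E n) + q 1 • q) from rfl,
    (show HasFDerivAt (fun q : E n => Real.exp (gFun q) • ((Pi.single 1 1 : E n) + q 1 • q)) _ p from hV).fderiv,
    (gderiv p hc).fderiv]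
  simp [smul_smul, smul_add]

/-- On the open subset
`M̃ = {x ∈ H^n : x_1 x_2 x_(n+1) ≠ 0, x_1 ≠ x_(n+1)}` of the hyperboloid model,
the vector field `V = e^{x_1/x_(n+1)}(∂_2 + x_2 Φ)` is a proper torqued vector
field: `∇_X V = f X + ω(X) V` with `f = x_2 e^{x_1/x_(n+1)}` nowhere zero,
`ω = dg` (with `g = x_1/x_(n+1)`) nowhere zero as a 1-form on `M̃`, and `ω(V) = 0`. -/
theorem proper_torqued_field_on_hyperboloid (hn : 2 ≤ n) (p : E n)
    (hp : mink p p = -1)                                        -- p ∈ H^n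
    (hp1 : p 0 * p 1 * p (Fin.last n) ≠ 0)                      -- x_1 x_2 x_(n+1) ≠ 0
    (hp2 : p 0 ≠ p (Fin.last n)) :                              -- x_1 ≠ x_(n+1)
    -- the torqued equation ∇_X V = f X + ω(X) V for all tangent X:
    (∀ X : E n → E n, mink (X p) p = 0 →
        hypbConn X V p = f p • X p + fderiv ℝ gFun p (X p) • V p) ∧
    -- ω(V) = 0:
    fderiv ℝ gFun p (V p) = 0 ∧
    -- the conformal scalar f is nowhere zero on M̃:
    f p ≠ 0 ∧
    -- the generating form ω = dg is nowhere zero as a 1-form on M̃: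
    (∃ v : E n, mink v p = 0 ∧ fderiv ℝ gFun p v ≠ 0) := by
  have ha : p 0 ≠ 0 := fun h => hp1 (by simp [h])
  have hb : p 1 ≠ 0 := fun h => hp1 (by simp [h])
  have hc : p (Fin.last n) ≠ 0 := fun h => hp1 (by simp [h])
  have hlast1 : (Fin.last n : Fin (n+1)) ≠ 1 := last_ne_one_fin hn
  have hlast0 : (Fin.last n : Fin (n+1)) ≠ 0 := last_ne_zero_fin (by omega)
  have h01 : (0 : Fin (n + 1)) ≠ 1 := zero_ne_one_fin (by omega)
  refine ⟨?_, ?_, ?_, ?_⟩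
  · -- torqued equation
    intro X hX
    set v := X p with hv
    have hmV : mink v (V p) = Real.exp (gFun p) * v 1 := by
      rw [show V p = Real.exp (gFun p) • ((Pi.single 1 1 : E n) + p 1 • p) from rfl,
        mink_smul_right, mink_add_right, mink_single_right (by omega),
        mink_smul_right, hX]
      ring
    rw [hypbConn, Vderiv_apply p hc, hmV]
    rw [show V p = Real.exp (gFun p) • ((Pi.single 1 1 : E n) + p 1 • p) from rfl,
      show f p = p 1 * Real.exp (gFun p) from rfl]
    module
  · -- ω(V) = 0
    have hV0 : V p 0 = Real.exp (gFun p) * (p 1 * p 0) := by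
      simp [V, Pi.single_apply, h01.symm]
    have hVl : V p (Fin.last n) = Real.exp (gFun p) * (p 1 * p (Fin.last n)) := by
      simp [V, Pi.single_apply, hlast1]
    rw [gderiv_apply p hc, hV0, hVl]
    field_simp
    ring
  · -- f ≠ 0
    simp only [f]
    exact mul_ne_zero hb (Real.exp_ne_zero _)
  · -- ω nowhere zero
    refine ⟨p (Fin.last n) • (Pi.single 0 1 : E n)
      + (p (Fin.last n) * p 0 / p 1) • (Pi.single 1 1 : E n), ?_, ?_⟩
    · have e0 : mink (Pi.single 0 (1:ℝ) : E n) p = -(p 0) := by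
        rw [single_mink_left]; simp; ring
      have e1 : mink (Pi.single 1 (1:ℝ) : E n) p = p 1 := by
        rw [single_mink_left]; simp [Pi.single_apply, h01.symm]
      rw [mink_add_left, mink_smul_left, mink_smul_left, e0, e1]
      field_simp
      ring
    · rw [gderiv_apply p hc]
      have h0 : (p (Fin.last n) • (Pi.single 0 1 : E n)
          + (p (Fin.last n) * p 0 / p 1) • (Pi.single 1 1 : E n)) 0 = p (Fin.last n) := by
        simp [Pi.single_apply, h01.symm]
      have hl : (p (Fin.last n) • (Pi.single 0 1 : E n)
          + (p (Fin.last n) * p 0 / p 1) • (Pi.single 1 1 : E n)) (Fin.last n) = 0 := by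
        simp [Pi.single_apply, hlast0, hlast1]
      rw [h0, hl]
      field_simp
      rw [mul_zero, sub_zero, div_self (pow_ne_zero 2 hc)]
      exact one_ne_zero

end HyperboloidModel
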